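/- arXiv:1306.1492 — 3 statements merged into one kernel-verified Lean document; each statement's English description precedes it below -/
import Mathlib

section
/- Let μ be a nonnegative monotonically increasing right-continuous function on (-∞, 0] with μ(x) ≥ 0 for x < 0, such that there is a constant M with ∫_{-a}^{-ε} x² dμ(x) ≤ M for all ε ∈ (0, a). Then ε² μ(-ε) → 0 as ε → 0⁺. -/
open MeasureTheory Set Filter Topology

private lemma integrableOn_sq (μ : StieltjesFunction ℝ) (b c : ℝ) :
    IntegrableOn (fun x : ℝ => x ^ 2) (Ioc b c) μ.measure := by
  refine Measure.integrableOn_of_bounded (M := max (b ^ 2) (c ^ 2)) ?_ ?_ ?_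
  · rw [μ.measure_Ioc]; exact ENNReal.ofReal_ne_top
  · exact (continuous_pow 2).aestronglyMeasurable
  · filter_upwards [ae_restrict_mem measurableSet_Ioc] with x hx
    rw [Real.norm_eq_abs, abs_of_nonneg (sq_nonneg x)]
    rcases le_or_gt 0 x with h | h
    · exact le_max_of_le_right (by nlinarith [hx.2])
    · exact le_max_of_le_left (by nlinarith [hx.1])

/-- Theorem 2.1 (first half): if μ is nonnegative (for x < 0), monotonically increasing and
right-continuous (a Stieltjes function), and the Stieltjes integrals ∫_{-a}^{-ε} x² dμ(x)
are bounded by M uniformly in ε ∈ (0, a), then ε² μ(-ε) → 0 as ε → 0⁺. -/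
theorem stmt0 (μ : StieltjesFunction ℝ) (a M : ℝ) (ha : 0 < a)
    (hμ0 : ∀ x : ℝ, x < 0 → 0 ≤ μ x)
    (hM : ∀ ε ∈ Ioo (0 : ℝ) a, ∫ x in Ioc (-a) (-ε), x ^ 2 ∂μ.measure ≤ M) :
    Tendsto (fun ε : ℝ => ε ^ 2 * μ (-ε)) (𝓝[>] 0) (𝓝 0) := by
  set ν := μ.measure with hν
  set F : ℝ → ℝ := fun ε => ∫ x in Ioc (-a) (-ε), x ^ 2 ∂ν with hF
  set s : Set ℝ := F '' Ioo (0 : ℝ) a with hs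
  have hs_ne : s.Nonempty := ⟨F (a / 2), ⟨a / 2, ⟨half_pos ha, half_lt_self ha⟩, rfl⟩⟩
  have hs_bdd : BddAbove s := by
    refine ⟨M, ?_⟩
    rintro y ⟨ε, hε, rfl⟩
    exact hM ε hε
  set S := sSup s with hS
  rw [Metric.tendsto_nhdsWithin_nhds]
  intro η hη
  -- choose δ with F δ > S - η/2
  obtain ⟨y, ⟨δ, hδ, rfl⟩, hyS⟩ :=
    exists_lt_of_lt_csSup hs_ne (show S - η / 2 < S by linarith)
  have hδ0 : 0 < δ := hδ.1
  have hμδ : 0 ≤ μ (-δ) := hμ0 _ (by linarith)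
  have hpos : 0 < μ (-δ) + 1 := by linarith
  refine ⟨min δ (Real.sqrt (η / (2 * (μ (-δ) + 1)))), lt_min hδ0 (Real.sqrt_pos.2 (by positivity)), ?_⟩
  intro ε hε hεd
  rw [Real.dist_eq, sub_zero] at hεd
  have hε0 : 0 < ε := hε
  have hεδ : ε < δ := lt_of_le_of_lt (le_abs_self ε) (lt_of_lt_of_le hεd (min_le_left _ _))
  have hεs : ε < Real.sqrt (η / (2 * (μ (-δ) + 1))) :=
    lt_of_le_of_lt (le_abs_self ε) (lt_of_lt_of_le hεd (min_le_right _ _))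
  -- split the integral
  have hsplit : F ε = F δ + ∫ x in Ioc (-δ) (-ε), x ^ 2 ∂ν := by
    show (∫ x in Ioc (-a) (-ε), x ^ 2 ∂ν) = (∫ x in Ioc (-a) (-δ), x ^ 2 ∂ν) + _
    rw [← Set.Ioc_union_Ioc_eq_Ioc (by linarith [hδ.2] : -a ≤ -δ) (by linarith : -δ ≤ -ε)]
    exact setIntegral_union (Set.Ioc_disjoint_Ioc_of_le le_rfl) measurableSet_Ioc
      (integrableOn_sq μ _ _) (integrableOn_sq μ _ _)
  have hFεS : F ε ≤ S := le_csSup hs_bdd ⟨ε, ⟨hε0, by linarith [hδ.2]⟩, rfl⟩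
  have hG : (∫ x in Ioc (-δ) (-ε), x ^ 2 ∂ν) < η / 2 := by
    have := hsplit ▸ hFεS
    linarith
  -- lower bound for the middle integral
  have hmono : μ (-δ) ≤ μ (-ε) := μ.mono (by linarith)
  have hlow : ε ^ 2 * (μ (-ε) - μ (-δ)) ≤ ∫ x in Ioc (-δ) (-ε), x ^ 2 ∂ν := by
    have hmeas : ν (Ioc (-δ) (-ε)) = ENNReal.ofReal (μ (-ε) - μ (-δ)) := μ.measure_Ioc _ _
    have htotr : (ν (Ioc (-δ) (-ε))).toReal = μ (-ε) - μ (-δ) := by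
      rw [hmeas, ENNReal.toReal_ofReal (by linarith)]
    have := setIntegral_ge_of_const_le (c := ε ^ 2) (f := fun x : ℝ => x ^ 2)
      measurableSet_Ioc (by rw [hmeas]; exact ENNReal.ofReal_ne_top)
      (fun x hx => by
        have hxε : ε ≤ -x := by linarith [hx.2]
        show ε ^ 2 ≤ x ^ 2
        nlinarith [hxε, hε0]) (integrableOn_sq μ _ _)
    have e : μ.measure.real (Ioc (-δ) (-ε)) = μ (-ε) - μ (-δ) := htotr
    rw [e, smul_eq_mul, mul_comm] at this
    exact this
  -- ε² μ(-δ) < η/2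
  have hsmall : ε ^ 2 * μ (-δ) < η / 2 := by
    have h1 : ε ^ 2 < η / (2 * (μ (-δ) + 1)) := (Real.lt_sqrt hε0.le).mp hεs
    have hq : η / (2 * (μ (-δ) + 1)) * (μ (-δ) + 1) = η / 2 := by
      field_simp
    nlinarith [mul_lt_mul_of_pos_right h1 hpos, sq_nonneg ε]
  have hfinal : ε ^ 2 * μ (-ε) < η := by nlinarith [sq_nonneg ε]
  rw [Real.dist_eq, sub_zero, abs_of_nonneg (mul_nonneg (sq_nonneg ε) (hμ0 _ (by linarith)))]
  exact hfinal
end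

section
/- Let ν be a measure on ℝ satisfying ∫_{-∞}^{∞} x²/(1+x²) ν(dx) < ∞, and define μ₋(x) = ν((-∞, x]) for x < 0. Then for every a with 0 < a < ∞, the integral ∫_{-a}^{0} |x| μ₋(x) dx is finite. -/
open MeasureTheory Set Filter Topology

/-- Relation (2.7) of Theorem 2.1: if ν is a Lévy measure, i.e.
∫ x²/(1+x²) ν(dx) < ∞, and μ₋(x) = ν((-∞, x]) for x < 0, then for every finite a > 0
the integral ∫_{-a}^{0} |x| μ₋(x) dx is finite. -/
theorem stmt1 (ν : Measure ℝ)
    (hν : ∫⁻ x, ENNReal.ofReal (x ^ 2 / (1 + x ^ 2)) ∂ν < ⊤) :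
    ∀ a : ℝ, 0 < a →
      ∫⁻ x in Ioo (-a) (0 : ℝ), ENNReal.ofReal |x| * ν (Iic x) < ⊤ := by
  intro a ha
  have hfmeas : Measurable (fun x : ℝ => ENNReal.ofReal (x ^ 2 / (1 + x ^ 2))) := by
    fun_prop
  -- ν gives finite mass to Iic (-c) for c > 0 (Markov)
  have hfin : ∀ c : ℝ, 0 < c → ν (Iic (-c)) < ⊤ := by
    intro c hc
    have hcpos : (0:ℝ) < c ^ 2 / (1 + c ^ 2) := by positivity
    have hmono : Iic (-c) ⊆ {x : ℝ | ENNReal.ofReal (c ^ 2 / (1 + c ^ 2))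
        ≤ ENNReal.ofReal (x ^ 2 / (1 + x ^ 2))} := by
      intro x hx
      have hx' : x ≤ -c := hx
      have hc2 : c ^ 2 ≤ x ^ 2 := by nlinarith
      simp only [mem_setOf_eq]
      apply ENNReal.ofReal_le_ofReal
      rw [div_le_div_iff₀ (by positivity) (by positivity)]
      nlinarith
    have hmark := meas_ge_le_lintegral_div (μ := ν) hfmeas.aemeasurable
      (ε := ENNReal.ofReal (c ^ 2 / (1 + c ^ 2)))
      (ENNReal.ofReal_pos.mpr hcpos).ne' ENNReal.ofReal_ne_top
    calc ν (Iic (-c)) ≤ ν {x : ℝ | ENNReal.ofReal (c ^ 2 / (1 + c ^ 2))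
          ≤ ENNReal.ofReal (x ^ 2 / (1 + x ^ 2))} := measure_mono hmono
      _ ≤ (∫⁻ x, ENNReal.ofReal (x ^ 2 / (1 + x ^ 2)) ∂ν)
            / ENNReal.ofReal (c ^ 2 / (1 + c ^ 2)) := hmark
      _ < ⊤ := ENNReal.div_lt_top hν.ne (ENNReal.ofReal_pos.mpr hcpos).ne'
  set ν' : Measure ℝ := ν.restrict (Iio 0) with hν'def
  haveI hsf : SigmaFinite ν' := by
    apply Measure.sigmaFinite_of_countable
      (S := range (fun n : ℕ => Iic (-(1 / (n + 1) : ℝ)) ∪ Ici 0))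
      (countable_range _)
    · rintro s ⟨n, rfl⟩
      rw [hν'def, Measure.restrict_apply (by measurability)]
      have hsub : (Iic (-(1 / (n + 1) : ℝ)) ∪ Ici 0) ∩ Iio 0
          ⊆ Iic (-(1 / (n + 1) : ℝ)) := by
        rintro x ⟨hx1 | hx1, hx2⟩
        · exact hx1
        · exact absurd (mem_Iio.mp hx2) (not_lt.mpr (mem_Ici.mp hx1))
      exact lt_of_le_of_lt (measure_mono hsub) (hfin _ (by positivity))
    · rw [sUnion_range]
      ext x
      simp only [mem_iUnion, mem_union, mem_Iic, mem_Ici, mem_univ, iff_true]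
      rcases lt_or_ge x 0 with hx | hx
      · have hx' : (0:ℝ) < -x := by linarith
        obtain ⟨n, hn⟩ := exists_nat_gt (1 / (-x))
        refine ⟨n, Or.inl ?_⟩
        have h1 : 1 < (n : ℝ) * (-x) := (div_lt_iff₀ hx').mp hn
        have h2 : (1 : ℝ) / (n + 1) ≤ -x := by
          rw [div_le_iff₀ (by positivity)]
          nlinarith
        linarith
      · exact ⟨0, Or.inr hx⟩
    -- rewrite ν as ν' on the relevant sets
  have hν'ν : ∀ x ∈ Ioo (-a) (0:ℝ), ENNReal.ofReal |x| * ν (Iic x)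
      = ENNReal.ofReal |x| * ν' (Iic x) := by
    intro x hx
    rw [hν'def, Measure.restrict_apply measurableSet_Iic]
    have h : Iic x ∩ Iio 0 = Iic x :=
      inter_eq_self_of_subset_left (s := Iic x) (t := Iio 0)
        fun z hz => lt_of_le_of_lt hz hx.2
    rw [h]
  have hI : ∫⁻ x, ENNReal.ofReal (x ^ 2 / (1 + x ^ 2)) ∂ν' < ⊤ :=
    lt_of_le_of_lt (setLIntegral_le_lintegral _ _) hν
  set C : ℝ := 2 * max 1 (a ^ 2) with hCdef
  have hC0 : 0 ≤ C := by positivity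
  have hmeas : Measurable (fun p : ℝ × ℝ =>
      (Iic p.1).indicator (fun _ => ENNReal.ofReal |p.1|) p.2) := by
    have heq : (fun p : ℝ × ℝ => (Iic p.1).indicator (fun _ => ENNReal.ofReal |p.1|) p.2)
        = {p : ℝ × ℝ | p.2 ≤ p.1}.indicator (fun p => ENNReal.ofReal |p.1|) := by
      ext p; by_cases h : p.2 ≤ p.1 <;> simp [indicator, h]
    rw [heq]
    exact (measurable_fst.abs.ennreal_ofReal).indicator
      (measurableSet_le measurable_snd measurable_fst)
  have inner_le : ∀ y : ℝ,
      (∫⁻ x in Ioo (-a) (0:ℝ), (Iic x).indicator (fun _ => ENNReal.ofReal |x|) y)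
        ≤ ENNReal.ofReal ((min a |y|) ^ 2) := by
    intro y
    set m := min a |y| with hm
    have hm0 : 0 ≤ m := le_min ha.le (abs_nonneg y)
    have hstep : ∀ x : ℝ, (Iic x).indicator (fun _ => ENNReal.ofReal |x|) y
        = (Ici y).indicator (fun x => ENNReal.ofReal |x|) x := by
      intro x; by_cases h : y ≤ x <;> simp [h]
    simp_rw [hstep]
    rw [lintegral_indicator measurableSet_Ici _,
      Measure.restrict_restrict measurableSet_Ici]
    have hbound : ∀ x ∈ Ici y ∩ Ioo (-a) (0:ℝ),
        ENNReal.ofReal |x| ≤ ENNReal.ofReal m := by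
      intro x hx
      apply ENNReal.ofReal_le_ofReal
      have hx0 : x < 0 := hx.2.2
      rw [abs_of_neg hx0]
      refine le_min (by linarith [hx.2.1]) ?_
      have hyx : y ≤ x := hx.1
      calc -x ≤ -y := by linarith
        _ ≤ |y| := neg_le_abs y
    have hvol : volume (Ici y ∩ Ioo (-a) (0:ℝ)) ≤ ENNReal.ofReal m := by
      rcases le_total a |y| with h | h
      · calc volume (Ici y ∩ Ioo (-a) (0:ℝ)) ≤ volume (Ioo (-a) (0:ℝ)) :=
              measure_mono inter_subset_right
          _ = ENNReal.ofReal a := by rw [Real.volume_Ioo]; ring_nf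
          _ ≤ ENNReal.ofReal m := by rw [hm, min_eq_left h]
      · have hsub : Ici y ∩ Ioo (-a) (0:ℝ) ⊆ Ico y 0 :=
          fun x hx => ⟨hx.1, hx.2.2⟩
        calc volume (Ici y ∩ Ioo (-a) (0:ℝ)) ≤ volume (Ico y (0:ℝ)) :=
              measure_mono hsub
          _ = ENNReal.ofReal (-y) := by rw [Real.volume_Ico]; ring_nf
          _ ≤ ENNReal.ofReal m := by
              rw [hm, min_eq_right h]
              exact ENNReal.ofReal_le_ofReal (neg_le_abs y)
    calc ∫⁻ x in Ici y ∩ Ioo (-a) (0:ℝ), ENNReal.ofReal |x|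
        ≤ ∫⁻ _x in Ici y ∩ Ioo (-a) (0:ℝ), ENNReal.ofReal m :=
          setLIntegral_mono measurable_const hbound
      _ = ENNReal.ofReal m * volume (Ici y ∩ Ioo (-a) (0:ℝ)) := setLIntegral_const _ _
      _ ≤ ENNReal.ofReal m * ENNReal.ofReal m := by gcongr
      _ = ENNReal.ofReal (m ^ 2) := by rw [← ENNReal.ofReal_mul hm0, sq]
  have hreal : ∀ y : ℝ, (min a |y|) ^ 2 ≤ C * (y ^ 2 / (1 + y ^ 2)) := by
    intro y
    have h1 : (0:ℝ) < 1 + y ^ 2 := by positivity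
    rw [← mul_div_assoc, le_div_iff₀ h1]
    have hm1 : min a |y| ≤ a := min_le_left _ _
    have hm2 : min a |y| ≤ |y| := min_le_right _ _
    have hm0 : 0 ≤ min a |y| := le_min ha.le (abs_nonneg y)
    have hCge : (2:ℝ) ≤ C := by
      have := le_max_left 1 (a ^ 2); rw [hCdef]; nlinarith
    rcases le_total (|y|) 1 with h | h
    · have hys : y ^ 2 ≤ 1 := by nlinarith [sq_abs y, abs_nonneg y]
      have hmsq : (min a |y|) ^ 2 ≤ y ^ 2 := by
        nlinarith [sq_abs y, mul_self_le_mul_self hm0 hm2]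
      have hprod : (min a |y|) ^ 2 * y ^ 2 ≤ y ^ 2 * 1 :=
        mul_le_mul hmsq hys (sq_nonneg y) (sq_nonneg y)
      have hlast : 0 ≤ (C - 2) * y ^ 2 :=
        mul_nonneg (by linarith) (sq_nonneg y)
      nlinarith
    · have hy2 : 1 ≤ y ^ 2 := by nlinarith [sq_abs y]
      have hmsq : (min a |y|) ^ 2 ≤ a ^ 2 := by
        nlinarith [mul_self_le_mul_self hm0 hm1]
      have h3 : (min a |y|) ^ 2 * (1 + y ^ 2) ≤ a ^ 2 * (1 + y ^ 2) :=
        mul_le_mul_of_nonneg_right hmsq h1.le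
      have h4 : a ^ 2 * (1 + y ^ 2) ≤ a ^ 2 * (2 * y ^ 2) := by
        nlinarith [sq_nonneg a]
      have h5 : a ^ 2 * (2 * y ^ 2) ≤ C * y ^ 2 := by
        have := le_max_right 1 (a ^ 2)
        rw [hCdef]; nlinarith [sq_nonneg y]
      linarith
  calc ∫⁻ x in Ioo (-a) (0:ℝ), ENNReal.ofReal |x| * ν (Iic x)
      = ∫⁻ x in Ioo (-a) (0:ℝ), ∫⁻ y, (Iic x).indicator (fun _ => ENNReal.ofReal |x|) y ∂ν' := by
        refine setLIntegral_congr_fun measurableSet_Ioo (fun x hx => ?_)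
        rw [hν'ν x hx, lintegral_indicator measurableSet_Iic _, setLIntegral_const]
    _ = ∫⁻ y, (∫⁻ x in Ioo (-a) (0:ℝ), (Iic x).indicator (fun _ => ENNReal.ofReal |x|) y) ∂ν' := by
        exact lintegral_lintegral_swap (μ := volume.restrict (Ioo (-a) (0:ℝ))) (ν := ν')
          (f := fun x y => (Iic x).indicator (fun _ => ENNReal.ofReal |x|) y) hmeas.aemeasurable
    _ ≤ ∫⁻ y, ENNReal.ofReal ((min a |y|) ^ 2) ∂ν' := by
        exact lintegral_mono fun y => inner_le y
    _ ≤ ∫⁻ y, ENNReal.ofReal C * ENNReal.ofReal (y ^ 2 / (1 + y ^ 2)) ∂ν' := by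
        refine lintegral_mono fun y => ?_
        rw [← ENNReal.ofReal_mul hC0]
        exact ENNReal.ofReal_le_ofReal (hreal y)
    _ = ENNReal.ofReal C * ∫⁻ y, ENNReal.ofReal (y ^ 2 / (1 + y ^ 2)) ∂ν' :=
        lintegral_const_mul' _ _ ENNReal.ofReal_ne_top
    _ < ⊤ := ENNReal.mul_lt_top ENNReal.ofReal_lt_top hI
end

section
/- Let Xt be a Lévy process and Δ a finite union of disjoint compact intervals contained in a finite interval K. Suppose P(X_t ∈ K) = O(t^{-1/2}) as t → ∞. Then for every positive integer n, the survival probability p(t, Δ) = P(X_τ ∈ Δ for all 0 ≤ τ ≤ t) satisfies p(t, Δ) = O(t^{-n/2}) as t → ∞. -/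
open MeasureTheory ProbabilityTheory Set Filter Topology

open scoped ENNReal

lemma aux_zero_isBigO {f g : ℝ → ℝ} (h : ∀ᶠ t in atTop, f t = 0) :
    f =O[atTop] g := by
  rw [Asymptotics.isBigO_iff]
  exact ⟨0, h.mono fun t ht => by simp [ht]⟩

lemma aux_geom_isBigO {r w : ℝ} (hr : 0 < r) (hw0 : 0 ≤ w) (hw1 : w < 1)
    {f : ℝ → ℝ} (hf0 : ∀ t, 0 ≤ f t)
    (hb : ∀ t : ℝ, r ≤ t → f t ≤ w ^ ⌊t / r⌋₊) (a : ℝ) :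
    f =O[atTop] fun t : ℝ => t ^ a := by
  rcases eq_or_lt_of_le hw0 with h0 | h0
  · -- w = 0
    apply aux_zero_isBigO
    filter_upwards [eventually_ge_atTop r] with t ht
    have h1 : (1 : ℝ) ≤ t / r := (one_le_div hr).2 ht
    have hm : 1 ≤ ⌊t / r⌋₊ := Nat.le_floor (by exact_mod_cast h1)
    have h2 : w ^ ⌊t / r⌋₊ = 0 := by
      rw [← h0]; exact zero_pow (by omega)
    exact le_antisymm (h2 ▸ hb t ht) (hf0 t)
  · have hlog : Real.log w < 0 := Real.log_neg h0 hw1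
    set c : ℝ := -Real.log w / r with hc
    have hcpos : 0 < c := div_pos (neg_pos.2 hlog) hr
    have h1 : f =O[atTop] fun t : ℝ => Real.exp (-c * t) := by
      rw [Asymptotics.isBigO_iff]
      refine ⟨Real.exp (-Real.log w), ?_⟩
      filter_upwards [eventually_ge_atTop r, eventually_gt_atTop (0 : ℝ)] with t ht ht0
      have hfloor : t / r - 1 ≤ (⌊t / r⌋₊ : ℝ) := (Nat.sub_one_lt_floor _).le
      have h2 : f t ≤ w ^ ((⌊t / r⌋₊ : ℕ) : ℝ) := by
        rw [Real.rpow_natCast]; exact hb t ht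
      have h3 : w ^ ((⌊t / r⌋₊ : ℕ) : ℝ) ≤ w ^ (t / r - 1) :=
        Real.rpow_le_rpow_of_exponent_ge h0 hw1.le hfloor
      have h4 : w ^ (t / r - 1) = Real.exp (-Real.log w) * Real.exp (-c * t) := by
        rw [Real.rpow_def_of_pos h0, ← Real.exp_add]
        congr 1
        rw [hc]
        field_simp
        ring
      rw [Real.norm_eq_abs, Real.norm_eq_abs, abs_of_nonneg (hf0 t),
        abs_of_pos (Real.exp_pos _)]
      calc f t ≤ w ^ (t / r - 1) := le_trans h2 h3
        _ = _ := h4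
    have h2 : (fun t : ℝ => Real.exp (-c * t)) =o[atTop] fun t : ℝ => t ^ a := by
      apply Asymptotics.isLittleO_of_tendsto'
      · filter_upwards [eventually_gt_atTop (0 : ℝ)] with t ht h
        exact absurd h (ne_of_gt (Real.rpow_pos_of_pos ht a))
      · have := tendsto_rpow_mul_exp_neg_mul_atTop_nhds_zero (-a) c hcpos
        apply this.congr'
        filter_upwards [eventually_gt_atTop (0 : ℝ)] with t ht
        rw [Real.rpow_neg ht.le, div_eq_mul_inv, mul_comm]
    exact h1.trans h2.isBigO

/-- Theorem 3.7: let X_t be a Lévy process (X_0 = 0 a.s., stationary independent increments,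
a.s. right-continuous paths), let Δ be contained in a finite interval K and suppose
P(X_t ∈ K) = O(t^{-1/2}) as t → ∞. Then for every positive integer n the survival
probability p(t,Δ) = P(X_τ ∈ Δ for all 0 ≤ τ ≤ t) satisfies p(t,Δ) = O(t^{-n/2}). -/
theorem stmt7 {Ω : Type*} [MeasurableSpace Ω] (P : Measure Ω) [IsProbabilityMeasure P]
    (X : ℝ → Ω → ℝ) (hmeas : ∀ t : ℝ, Measurable (X t))
    (hX0 : ∀ᵐ ω ∂P, X 0 ω = 0)
    (hstat : ∀ s t : ℝ, 0 ≤ s → s ≤ t →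
      Measure.map (fun ω => X t ω - X s ω) P = Measure.map (X (t - s)) P)
    (hindep : ∀ (n : ℕ) (u : ℕ → ℝ), Monotone u → (∀ i, 0 ≤ u i) →
      iIndepFun
        (fun i : Fin n => fun ω => X (u (i + 1)) ω - X (u i) ω) P)
    (hrc : ∀ᵐ ω ∂P, ∀ t : ℝ, 0 ≤ t → ContinuousWithinAt (fun s => X s ω) (Ici t) t)
    (Δ K : Set ℝ) (hΔK : Δ ⊆ K) (hKbdd : Bornology.IsBounded K)
    (hK : (fun t : ℝ => (P {ω | X t ω ∈ K}).toReal) =O[atTop]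
      fun t : ℝ => t ^ (-(1 : ℝ) / 2)) :
    ∀ n : ℕ, 0 < n →
      (fun t : ℝ => (P {ω | ∀ τ : ℝ, 0 ≤ τ → τ ≤ t → X τ ω ∈ Δ}).toReal) =O[atTop]
        fun t : ℝ => t ^ (-(n : ℝ) / 2) := by
  classical
  obtain ⟨C₀, hC₀⟩ := isBounded_iff_forall_norm_le.mp hKbdd
  set C : ℝ := max C₀ 0 with hCdef
  have hC : ∀ x ∈ K, |x| ≤ C := fun x hx => le_trans (hC₀ x hx) (le_max_left _ _)
  have hC0 : (0 : ℝ) ≤ C := le_max_right _ _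
  set D : Set ℝ := Set.Icc (-(2 * C)) (2 * C) with hDdef
  have hDmeas : MeasurableSet D := measurableSet_Icc
  have hsubD : ∀ x ∈ K, ∀ y ∈ K, x - y ∈ D := by
    intro x hx y hy
    have h1 := abs_le.mp (hC x hx)
    have h2 := abs_le.mp (hC y hy)
    rw [hDdef, Set.mem_Icc]
    constructor <;> linarith [h1.1, h1.2, h2.1, h2.2]
  intro n hn
  by_cases hdeg : ∀ r : ℝ, 0 < r → P {ω | X r ω ∈ D} = 1
  · -- degenerate case: X_t = 0 a.s. for all positive t
    have hZ : ∀ t : ℝ, 0 < t → ∀ᵐ ω ∂P, X t ω = 0 := by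
      intro t ht
      set u : ℕ → ℝ := fun j => (j : ℝ) * t with hu
      set g : ℕ → Ω → ℝ := fun i => fun ω => X (u (i + 1)) ω - X (u i) ω with hg
      have humono : Monotone u := fun i j hij => by
        dsimp only [u]; exact mul_le_mul_of_nonneg_right (Nat.cast_le.2 hij) ht.le
      have hupos : ∀ i, 0 ≤ u i := fun i => mul_nonneg (Nat.cast_nonneg _) ht.le
      have hgmeas : ∀ i : ℕ, Measurable (g i) := fun i => (hmeas _).sub (hmeas _)
      have hglaw : ∀ i : ℕ, Measure.map (g i) P = Measure.map (X t) P := by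
        intro i
        have harg : u (i + 1) - u i = t := by
          dsimp only [u]; push_cast; ring
        have := hstat (u i) (u (i + 1)) (hupos i) (humono (Nat.le_succ i))
        rwa [harg] at this
      have hDae : ∀ s : ℝ, 0 < s → ∀ᵐ ω ∂P, X s ω ∈ D := by
        intro s hs
        have hms : MeasurableSet {ω | X s ω ∈ D} := (hmeas s) hDmeas
        have h1 : P {ω | X s ω ∈ D}ᶜ = 0 := (prob_compl_eq_zero_iff hms).mpr (hdeg s hs)
        rw [ae_iff]
        simpa [Set.compl_setOf] using h1
      have hgae : ∀ i : ℕ, ∀ᵐ ω ∂P, g i ω ∈ D := by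
        intro i
        have h1 : P (g i ⁻¹' D) = P (X t ⁻¹' D) := by
          rw [← Measure.map_apply (hgmeas i) hDmeas, ← Measure.map_apply (hmeas t) hDmeas,
            hglaw i]
        have h2 : P (X t ⁻¹' D) = 1 := hdeg t ht
        have hms : MeasurableSet {ω | g i ω ∈ D} := (hgmeas i) hDmeas
        have h3 : P {ω | g i ω ∈ D}ᶜ = 0 :=
          (prob_compl_eq_zero_iff hms).mpr (h1.trans h2)
        rw [ae_iff]
        simpa [Set.compl_setOf] using h3
      have hgmem : ∀ i : ℕ, MemLp (g i) 2 P := fun i =>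
        memLp_of_bounded (hgae i) (hgmeas i).aestronglyMeasurable 2
      have hXtmem : MemLp (X t) 2 P :=
        memLp_of_bounded (hDae t ht) (hmeas t).aestronglyMeasurable 2
      have hgint1 : ∀ i : ℕ, ∫ ω, g i ω ∂P = ∫ ω, X t ω ∂P := by
        intro i
        have e1 : ∫ ω, g i ω ∂P = ∫ x, x ∂(Measure.map (g i) P) :=
          (integral_map (hgmeas i).aemeasurable measurable_id.aestronglyMeasurable).symm
        have e2 : ∫ x, x ∂(Measure.map (X t) P) = ∫ ω, X t ω ∂P :=
          integral_map (hmeas t).aemeasurable measurable_id.aestronglyMeasurable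
        rw [e1, hglaw i, e2]
      have hgint2 : ∀ i : ℕ, ∫ ω, (g i ω) ^ 2 ∂P = ∫ ω, (X t ω) ^ 2 ∂P := by
        intro i
        have hsq : AEStronglyMeasurable (fun x : ℝ => x ^ 2) (Measure.map (g i) P) :=
          (measurable_id.pow_const 2).aestronglyMeasurable
        have hsq' : AEStronglyMeasurable (fun x : ℝ => x ^ 2) (Measure.map (X t) P) :=
          (measurable_id.pow_const 2).aestronglyMeasurable
        have e1 : ∫ ω, (g i ω) ^ 2 ∂P = ∫ x, x ^ 2 ∂(Measure.map (g i) P) :=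
          (integral_map (hgmeas i).aemeasurable hsq).symm
        have e2 : ∫ x, x ^ 2 ∂(Measure.map (X t) P) = ∫ ω, (X t ω) ^ 2 ∂P :=
          integral_map (hmeas t).aemeasurable hsq'
        rw [e1, hglaw i, e2]
      have hvar_eq : ∀ i : ℕ, variance (g i) P = variance (X t) P := by
        intro i
        rw [variance_eq_sub (hgmem i), variance_eq_sub hXtmem]
        simp only [Pi.pow_apply]
        rw [hgint2 i, hgint1 i]
      -- sums of increments
      have htel : ∀ (m : ℕ) (ω : Ω),
          (∑ i : Fin m, g i) ω = X (u m) ω - X (u 0) ω := by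
        intro m ω
        rw [Finset.sum_apply]
        rw [Fin.sum_univ_eq_sum_range (fun i => g i ω)]
        exact Finset.sum_range_sub (fun i => X (u i) ω) m
      have hSmeas : ∀ m : ℕ, Measurable (∑ i : Fin m, g (i : ℕ)) := by
        intro m
        have : Measurable (fun ω => ∑ i : Fin m, g (i : ℕ) ω) :=
          Finset.measurable_sum _ (fun i _ => hgmeas i)
        convert this using 1
        funext ω
        rw [Finset.sum_apply]
      have hSae : ∀ m : ℕ, 1 ≤ m → ∀ᵐ ω ∂P, (∑ i : Fin m, g (i : ℕ)) ω ∈ D := by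
        intro m hm
        have hmt : 0 < (m : ℝ) * t := by positivity
        filter_upwards [hX0, hDae ((m : ℝ) * t) hmt] with ω h0 hD'
        rw [htel m ω]
        have hu0 : u 0 = 0 := by simp [u]
        have hum : u m = (m : ℝ) * t := rfl
        rw [hu0, hum, h0, sub_zero]
        exact hD'
      have hvar_le : ∀ m : ℕ, 1 ≤ m → (m : ℝ) * variance (X t) P ≤ (2 * C) ^ 2 := by
        intro m hm
        have hindm := hindep m u humono hupos
        have hsum := IndepFun.variance_sum (μ := P)
          (X := fun i : Fin m => g (i : ℕ)) (s := Finset.univ)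
          (fun i _ => hgmem i) (fun i _ j _ hij => hindm.indepFun hij)
        have hconst : ∑ i : Fin m, variance (g (i : ℕ)) P = (m : ℝ) * variance (X t) P := by
          have he : ∀ i : Fin m, variance (g (i : ℕ)) P = variance (X t) P :=
            fun i => hvar_eq i
          simp only [he]
          simp [Finset.card_univ, nsmul_eq_mul]
        have hb := variance_le_sq_of_bounded (a := -(2 * C)) (b := 2 * C)
          (hSae m hm) (hSmeas m).aemeasurable
        have : ((2 * C - -(2 * C)) / 2) ^ 2 = (2 * C) ^ 2 := by ring
        rw [this] at hb
        calc (m : ℝ) * variance (X t) P = ∑ i : Fin m, variance (g (i : ℕ)) P := hconst.symm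
          _ = variance (∑ i : Fin m, g (i : ℕ)) P := hsum.symm
          _ ≤ (2 * C) ^ 2 := hb
      have hvar0 : variance (X t) P = 0 := by
        by_contra h
        have hpos : 0 < variance (X t) P := lt_of_le_of_ne (variance_nonneg _ _) (Ne.symm h)
        obtain ⟨m, hm⟩ := exists_nat_gt ((2 * C) ^ 2 / variance (X t) P)
        have h1 := hvar_le (m + 1) (Nat.le_add_left 1 m)
        have h2 : (2 * C) ^ 2 / variance (X t) P < ((m + 1 : ℕ) : ℝ) := by
          push_cast
          push_cast at hm
          linarith
        have h3 : (2 * C) ^ 2 < ((m + 1 : ℕ) : ℝ) * variance (X t) P :=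
          (div_lt_iff₀ hpos).mp h2
        linarith
      -- mean is zero
      set c : ℝ := ∫ ω, X t ω ∂P with hcdef
      have hmean : ∀ m : ℕ, 1 ≤ m → (m : ℝ) * |c| ≤ 2 * C := by
        intro m hm
        have hint : ∫ ω, (∑ i : Fin m, g (i : ℕ)) ω ∂P = (m : ℝ) * c := by
          have e0 : ∫ ω, (∑ i : Fin m, g (i : ℕ)) ω ∂P
              = ∫ ω, ∑ i : Fin m, g (i : ℕ) ω ∂P := by
            congr 1; funext ω; rw [Finset.sum_apply]
          rw [e0, integral_finset_sum (Finset.univ)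
            (fun (i : Fin m) _ => ((hgmem (i : ℕ)).integrable one_le_two))]
          have he : ∀ i : Fin m, ∫ ω, g (i : ℕ) ω ∂P = c := fun i => hgint1 i
          simp only [he]
          simp [Finset.card_univ, nsmul_eq_mul]
        have hbd : ∀ᵐ ω ∂P, ‖(∑ i : Fin m, g (i : ℕ)) ω‖ ≤ 2 * C := by
          filter_upwards [hSae m hm] with ω hω
          rw [Real.norm_eq_abs, abs_le]
          exact ⟨by linarith [hω.1], hω.2⟩
        have := norm_integral_le_of_norm_le_const (μ := P) hbd
        rw [hint] at this
        simpa [measure_univ] using this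
      have hc0 : c = 0 := by
        by_contra h
        have habs : 0 < |c| := abs_pos.mpr h
        obtain ⟨m, hm⟩ := exists_nat_gt (2 * C / |c|)
        have h1 := hmean (m + 1) (Nat.le_add_left 1 m)
        have h2 : 2 * C / |c| < ((m + 1 : ℕ) : ℝ) := by push_cast; push_cast at hm; linarith
        have h3 : 2 * C < ((m + 1 : ℕ) : ℝ) * |c| := (div_lt_iff₀ habs).mp h2
        linarith
      -- conclude X t = c = 0 a.s.
      have hveq := variance_eq_integral hXtmem.aemeasurable
      rw [hvar0] at hveq
      have hintsq : Integrable (fun ω => (X t ω - c) ^ 2) P := by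
        have h1 : MemLp (X t - fun _ => c) 2 P := hXtmem.sub (memLp_const c)
        have h2 := h1.integrable_sq
        simpa [Pi.sub_apply, Pi.pow_apply] using h2
      have hzero : ∀ᵐ ω ∂P, (X t ω - c) ^ 2 = 0 := by
        have h1 : (0 : ℝ) = ∫ ω, (X t ω - c) ^ 2 ∂P := by
          rw [hveq]
        have h2 := (integral_eq_zero_iff_of_nonneg
          (fun ω => sq_nonneg (X t ω - c)) hintsq).mp h1.symm
        filter_upwards [h2] with ω hω using hω
      filter_upwards [hzero] with ω hω
      have := pow_eq_zero_iff (n := 2) (by norm_num) |>.mp hω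
      rw [sub_eq_zero] at this
      rw [this, hc0]
    -- now derive 0 ∉ K
    have h0K : (0 : ℝ) ∉ K := by
      intro h0K
      obtain ⟨c0, hc0⟩ := hK.bound
      have htend : Tendsto (fun t : ℝ => c0 * ‖t ^ (-(1 : ℝ) / 2)‖) atTop (𝓝 0) := by
        have h1 : Tendsto (fun t : ℝ => t ^ (-(1 : ℝ) / 2)) atTop (𝓝 0) := by
          have := tendsto_rpow_neg_atTop (y := (1 : ℝ) / 2) (by norm_num)
          convert this using 2
          norm_num
        have h2 : Tendsto (fun t : ℝ => ‖t ^ (-(1 : ℝ) / 2)‖) atTop (𝓝 0) := by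
          simpa using h1.norm
        simpa using h2.const_mul c0
      have hlt : ∀ᶠ t : ℝ in atTop, c0 * ‖t ^ (-(1 : ℝ) / 2)‖ < 1 :=
        htend.eventually_lt_const one_pos
      obtain ⟨t, hbnd, hlt1, ht0⟩ := (hc0.and (hlt.and (eventually_gt_atTop (0 : ℝ)))).exists
      have hone : P {ω | X t ω ∈ K} = 1 := by
        have hsub : {ω | X t ω = 0} ⊆ {ω | X t ω ∈ K} := by
          intro ω hω
          simp only [Set.mem_setOf_eq] at *
          rw [hω]; exact h0K
        have h1 : P {ω | ¬ X t ω = 0} = 0 := ae_iff.mp (hZ t ht0)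
        have h2 : (1 : ℝ≥0∞) ≤ P {ω | X t ω ∈ K} + P {ω | X t ω ∈ K}ᶜ := by
          rw [← measure_univ (μ := P)]
          exact le_trans (measure_mono (by rw [Set.union_compl_self])) (measure_union_le _ _)
        have h3 : P {ω | X t ω ∈ K}ᶜ = 0 := by
          apply measure_mono_null _ h1
          intro ω hω
          simp only [Set.mem_compl_iff, Set.mem_setOf_eq] at *
          intro he
          exact hω (hsub he)
        rw [h3, add_zero] at h2
        exact le_antisymm prob_le_one h2
      rw [hone] at hbnd
      simp only [ENNReal.toReal_one, norm_one] at hbnd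
      linarith
    have h0Δ : (0 : ℝ) ∉ Δ := fun h => h0K (hΔK h)
    apply aux_zero_isBigO
    filter_upwards [eventually_ge_atTop (0 : ℝ)] with t ht
    have hsub : {ω | ∀ τ : ℝ, 0 ≤ τ → τ ≤ t → X τ ω ∈ Δ} ⊆ {ω | ¬ X 0 ω = 0} := by
      intro ω hω
      simp only [Set.mem_setOf_eq] at *
      intro he
      exact h0Δ (he ▸ hω 0 le_rfl ht)
    have h1 : P {ω | ¬ X 0 ω = 0} = 0 := ae_iff.mp hX0
    have h2 : P {ω | ∀ τ : ℝ, 0 ≤ τ → τ ≤ t → X τ ω ∈ Δ} = 0 :=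
      measure_mono_null hsub h1
    rw [h2]
    simp
  · -- non-degenerate case
    push_neg at hdeg
    obtain ⟨r, hr, hwne⟩ := hdeg
    set w : ℝ≥0∞ := P {ω | X r ω ∈ D} with hwdef
    have hwlt : w < 1 := lt_of_le_of_ne prob_le_one hwne
    have hwtop : w ≠ ⊤ := (lt_of_lt_of_le hwlt le_top).ne
    have key : ∀ (m : ℕ) (t : ℝ), (m : ℝ) * r ≤ t →
        P {ω | ∀ τ : ℝ, 0 ≤ τ → τ ≤ t → X τ ω ∈ Δ} ≤ w ^ m := by
      intro m t hmt
      set u : ℕ → ℝ := fun j => (j : ℝ) * r with hu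
      have humono : Monotone u := fun i j hij => by
        dsimp only [u]; exact mul_le_mul_of_nonneg_right (Nat.cast_le.2 hij) hr.le
      have hupos : ∀ i, 0 ≤ u i := fun i => mul_nonneg (Nat.cast_nonneg _) hr.le
      have hind := hindep m u humono hupos
      have hprod := hind.measure_inter_preimage_eq_mul (S := Finset.univ)
        (sets := fun _ : Fin m => D) (fun i _ => hDmeas)
      have hlaw : ∀ i : Fin m,
          P ((fun ω => X (u ((i : ℕ) + 1)) ω - X (u (i : ℕ)) ω) ⁻¹' D) = w := by
        intro i
        have harg : u ((i : ℕ) + 1) - u (i : ℕ) = r := by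
          dsimp only [u]; push_cast; ring
        have hst := hstat (u (i : ℕ)) (u ((i : ℕ) + 1)) (hupos _) (humono (Nat.le_succ _))
        rw [harg] at hst
        have h1 : Measurable fun ω => X (u ((i : ℕ) + 1)) ω - X (u (i : ℕ)) ω :=
          (hmeas _).sub (hmeas _)
        rw [← Measure.map_apply h1 hDmeas, hst, Measure.map_apply (hmeas r) hDmeas]
        rfl
      have hsub : {ω | ∀ τ : ℝ, 0 ≤ τ → τ ≤ t → X τ ω ∈ Δ} ⊆
          ⋂ i ∈ (Finset.univ : Finset (Fin m)),
            (fun ω => X (u ((i : ℕ) + 1)) ω - X (u (i : ℕ)) ω) ⁻¹' D := by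
        intro ω hω
        simp only [Set.mem_setOf_eq] at hω
        rw [Set.mem_iInter₂]
        intro i _
        have hile : ((i : ℕ) : ℝ) + 1 ≤ (m : ℝ) := by
          have := i.isLt
          exact_mod_cast Nat.succ_le_of_lt this
        have hle1 : u ((i : ℕ) + 1) ≤ t := by
          calc u ((i : ℕ) + 1) = (((i : ℕ) : ℝ) + 1) * r := by dsimp only [u]; push_cast; ring
            _ ≤ (m : ℝ) * r := mul_le_mul_of_nonneg_right hile hr.le
            _ ≤ t := hmt
        have hle0 : u (i : ℕ) ≤ t := le_trans (humono (Nat.le_succ _)) hle1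
        have hmem1 : X (u ((i : ℕ) + 1)) ω ∈ K := hΔK (hω _ (hupos _) hle1)
        have hmem0 : X (u (i : ℕ)) ω ∈ K := hΔK (hω _ (hupos _) hle0)
        exact hsubD _ hmem1 _ hmem0
      calc P {ω | ∀ τ : ℝ, 0 ≤ τ → τ ≤ t → X τ ω ∈ Δ}
          ≤ P (⋂ i ∈ (Finset.univ : Finset (Fin m)),
              (fun ω => X (u ((i : ℕ) + 1)) ω - X (u (i : ℕ)) ω) ⁻¹' D) :=
            measure_mono hsub
        _ = ∏ i ∈ (Finset.univ : Finset (Fin m)),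
              P ((fun ω => X (u ((i : ℕ) + 1)) ω - X (u (i : ℕ)) ω) ⁻¹' D) := hprod
        _ = ∏ i ∈ (Finset.univ : Finset (Fin m)), w :=
            Finset.prod_congr rfl (fun i _ => hlaw i)
        _ = w ^ m := by simp [Finset.prod_const, Finset.card_univ]
    have hwR1 : w.toReal < 1 := by
      rw [← ENNReal.toReal_one]
      exact (ENNReal.toReal_lt_toReal hwtop ENNReal.one_ne_top).mpr hwlt
    apply aux_geom_isBigO hr ENNReal.toReal_nonneg hwR1
      (fun t => ENNReal.toReal_nonneg)
    intro t ht
    have hdiv : (0 : ℝ) ≤ t / r := div_nonneg (le_trans hr.le ht) hr.le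
    have hfl : ((⌊t / r⌋₊ : ℕ) : ℝ) * r ≤ t := by
      have h1 : ((⌊t / r⌋₊ : ℕ) : ℝ) ≤ t / r := Nat.floor_le hdiv
      calc ((⌊t / r⌋₊ : ℕ) : ℝ) * r ≤ (t / r) * r := mul_le_mul_of_nonneg_right h1 hr.le
        _ = t := div_mul_cancel₀ t hr.ne'
    have h1 := key ⌊t / r⌋₊ t hfl
    have h2 : (P {ω | ∀ τ : ℝ, 0 ≤ τ → τ ≤ t → X τ ω ∈ Δ}).toReal
        ≤ (w ^ ⌊t / r⌋₊).toReal :=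
      ENNReal.toReal_mono (by simp [ENNReal.pow_ne_top hwtop]) h1
    rwa [ENNReal.toReal_pow] at h2
end
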